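/- arXiv:2305.06749 — 7 statements merged into one kernel-verified Lean document; each statement's English description precedes it below -/
import Mathlib

section
/- Let γ ∈ [0,2] and let p, q ≥ 1 be conjugate exponents (1/p + 1/q = 1). For all v, v_* ∈ ℝ³, I, I_* ∈ [0,∞), σ ∈ 𝕊², r ∈ (0,1], R ∈ [0,1] such that (v−v_*)·σ ≤ 0, one has (E/m)^{γ/2} ≤ (√2/s̄_{ij})^{γ/q} · r^{−γ/(2q)} · ⟨v',I'⟩_i^{γ/q} · ⟨v,I⟩_i^{γ} · ⟨v_*,I_*⟩_j^{γ/p}. -/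
open MeasureTheory Real Set
open scoped ENNReal Classical

noncomputable section

/-- `ℝ³` as a Euclidean space. -/
abbrev E3 := EuclideanSpace ℝ (Fin 3)

/-- The surface measure on the unit sphere `𝕊² ⊂ ℝ³` (total mass `4π`). -/
def sphM : Measure (Metric.sphere (0 : E3) 1) := (volume : Measure E3).toSphere

/-- The phase-space region `ℝ³ × [0,∞)`. -/
def regionVI : Set (E3 × ℝ) := {p | 0 ≤ p.2}

/-- Total energy `E = (μ/2)|v - v_*|² + I + I_*` with reduced mass `μ = m_i m_j/(m_i+m_j)`. -/
def EE (mi mj : ℝ) (v vs : E3) (I Is : ℝ) : ℝ :=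
  mi * mj / (mi + mj) / 2 * ‖v - vs‖ ^ 2 + I + Is

/-- Post-collisional velocity `v' = V + (m_j/M)√(2RE/μ) σ`. -/
def vprime (mi mj : ℝ) (v vs σ : E3) (I Is R : ℝ) : E3 :=
  (mi / (mi + mj)) • v + (mj / (mi + mj)) • vs +
    (mj / (mi + mj) * Real.sqrt (2 * R * EE mi mj v vs I Is / (mi * mj / (mi + mj)))) • σ

/-- Post-collisional partner velocity `v'_* = V - (m_i/M)√(2RE/μ) σ`. -/
def vsprime (mi mj : ℝ) (v vs σ : E3) (I Is R : ℝ) : E3 :=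
  (mi / (mi + mj)) • v + (mj / (mi + mj)) • vs -
    (mi / (mi + mj) * Real.sqrt (2 * R * EE mi mj v vs I Is / (mi * mj / (mi + mj)))) • σ

/-- Post-collisional internal energy `I' = r(1-R)E`. -/
def Iprime (mi mj : ℝ) (v vs : E3) (I Is r R : ℝ) : ℝ :=
  r * (1 - R) * EE mi mj v vs I Is

/-- Post-collisional partner internal energy `I'_* = (1-r)(1-R)E`. -/
def Isprime (mi mj : ℝ) (v vs : E3) (I Is r R : ℝ) : ℝ :=
  (1 - r) * (1 - R) * EE mi mj v vs I Is

/-- Lebesgue bracket `⟨v,I⟩ = √(1 + m|v|²/(2m̄) + I/m̄)`. -/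
def brk (mi mm : ℝ) (v : E3) (I : ℝ) : ℝ :=
  Real.sqrt (1 + mi * ‖v‖ ^ 2 / (2 * mm) + I / mm)

/-- Mass-ratio parameter `s̄_{ij} = min{m_i, m_j}/(m_i + m_j)`. -/
def sbar (mi mj : ℝ) : ℝ := min mi mj / (mi + mj)

/-- The weight `d_{ij}(r,R) = r^{α_i}(1-r)^{α_j}(1-R)^{α_i+α_j+1}√R`. -/
def dij (ai aj r R : ℝ) : ℝ :=
  r ^ ai * (1 - r) ^ aj * (1 - R) ^ (ai + aj + 1) * Real.sqrt R

/-- The constant `ρ(q) = ∫_{[0,1]²} r^{-(1+γ/2)/q}(1-R)^{-1/q} d_{ij}(r,R) b̃(r,R) dr dR`. -/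
def rhoC (ai aj γ q : ℝ) (btil : ℝ → ℝ → ℝ) : ℝ≥0∞ :=
  ∫⁻ rR in Icc (0 : ℝ) 1 ×ˢ Icc (0 : ℝ) 1,
    ENNReal.ofReal (rR.1 ^ (-((1 + γ / 2) / q)) * (1 - rR.2) ^ (-(1 / q))
      * dij ai aj rR.1 rR.2 * btil rR.1 rR.2)

/-- Normalized relative velocity `û = (v - v_*)/|v - v_*|`. -/
def uhat (v vs : E3) : E3 := ‖v - vs‖⁻¹ • (v - vs)

/-- The averaging operator
`S(χ)(v,I,v_*,I_*) = ∫_{𝕊²×[0,1]²} χ(v',I') b(û·σ) r^{-γ/(2q)} d_{ij}(r,R) b̃(r,R) dr dR dσ`,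
read as `0` when `u = 0`. -/
def Sop (mi mj ai aj γ q : ℝ) (b : ℝ → ℝ) (btil : ℝ → ℝ → ℝ) (χ : E3 × ℝ → ℝ)
    (v : E3) (I : ℝ) (vs : E3) (Is : ℝ) : ℝ≥0∞ :=
  if v = vs then 0 else
    ∫⁻ σ, (∫⁻ rR in Icc (0 : ℝ) 1 ×ˢ Icc (0 : ℝ) 1,
      ENNReal.ofReal (χ (vprime mi mj v vs (σ : E3) I Is rR.2,
          Iprime mi mj v vs I Is rR.1 rR.2)
        * b (inner ℝ (uhat v vs) (σ : E3))
        * rR.1 ^ (-(γ / (2 * q))) * dij ai aj rR.1 rR.2 * btil rR.1 rR.2)) ∂sphM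

/-- The (unweighted) `L^q` norm on `ℝ³ × [0,∞)`. -/
def LqN (q : ℝ) (χ : E3 × ℝ → ℝ) : ℝ≥0∞ :=
  (∫⁻ p in regionVI, ENNReal.ofReal (χ p) ^ q) ^ (1 / q)

/-- The polynomially weighted `L^p` norm `‖φ‖_{L^p_{i,s}}`. -/
def LpW (pp s mi mm : ℝ) (φ : E3 × ℝ → ℝ) : ℝ≥0∞ :=
  (∫⁻ x in regionVI, ENNReal.ofReal (φ x * brk mi mm x.1 x.2 ^ s) ^ pp) ^ (1 / pp)

/-- The gain part `Q⁺(f,g)` of the collision operator (integrand read as `0` when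
`I' I'_* = 0`). -/
def Qgain (mi mj ai aj : ℝ)
    (B : (E3 × ℝ) × (E3 × ℝ) × Metric.sphere (0 : E3) 1 × ℝ × ℝ → ℝ)
    (f g : E3 × ℝ → ℝ) (v : E3) (I : ℝ) : ℝ≥0∞ :=
  ∫⁻ x in regionVI, ∫⁻ σ, (∫⁻ rR in Icc (0 : ℝ) 1 ×ˢ Icc (0 : ℝ) 1,
    ENNReal.ofReal (
      if Iprime mi mj v x.1 I x.2 rR.1 rR.2 * Isprime mi mj v x.1 I x.2 rR.1 rR.2 = 0 then 0
      else f (vprime mi mj v x.1 (σ : E3) I x.2 rR.2, Iprime mi mj v x.1 I x.2 rR.1 rR.2)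
        * g (vsprime mi mj v x.1 (σ : E3) I x.2 rR.2, Isprime mi mj v x.1 I x.2 rR.1 rR.2)
        * (I / Iprime mi mj v x.1 I x.2 rR.1 rR.2) ^ ai
        * (x.2 / Isprime mi mj v x.1 I x.2 rR.1 rR.2) ^ aj
        * B ((v, I), x, σ, rR.1, rR.2) * dij ai aj rR.1 rR.2)) ∂sphM
private lemma brk_sq_mul (mi mm : ℝ) (hmi : 0 ≤ mi) (hmm : 0 < mm) (v : E3) (I : ℝ)
    (hI : 0 ≤ I) : mm * brk mi mm v I ^ 2 = mm + mi * ‖v‖ ^ 2 / 2 + I := by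
  unfold brk
  rw [Real.sq_sqrt]
  · field_simp
  · have h1 : 0 ≤ mi * ‖v‖ ^ 2 / (2 * mm) := by
      apply div_nonneg (mul_nonneg hmi (sq_nonneg _)); linarith
    have h2 : 0 ≤ I / mm := div_nonneg hI hmm.le
    linarith

private lemma brk_one_le (mi mm : ℝ) (hmi : 0 ≤ mi) (hmm : 0 < mm) (v : E3) (I : ℝ)
    (hI : 0 ≤ I) : 1 ≤ brk mi mm v I := by
  have h1 : 0 ≤ mi * ‖v‖ ^ 2 / (2 * mm) := by
    apply div_nonneg (mul_nonneg hmi (sq_nonneg _)); linarith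
  have h2 : 0 ≤ I / mm := div_nonneg hI hmm.le
  have h := Real.sqrt_le_sqrt (show (1:ℝ) ≤ 1 + mi * ‖v‖ ^ 2 / (2 * mm) + I / mm by linarith)
  rwa [Real.sqrt_one] at h

private lemma rpow_sq_eq (x : ℝ) (hx : 0 ≤ x) (e : ℝ) : (x ^ 2 : ℝ) ^ e = x ^ (2 * e) := by
  rw [← Real.rpow_natCast x 2, ← Real.rpow_mul hx]; norm_num

/-- Core real-arithmetic estimate for the backward `q`-part: `R E s² ≤ mᵢ(|v'|² + |v|²)`. -/
private lemma aux_RE (μ mi s lam R Ev Np Nv : ℝ) (hμ : 0 < μ) (hμmi : μ ≤ mi)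
    (h1 : (s * lam) ^ 2 ≤ (Np + Nv) ^ 2) (h2 : μ * lam ^ 2 = 2 * (R * Ev)) :
    R * Ev * s ^ 2 ≤ mi * (Np ^ 2 + Nv ^ 2) := by
  have hA := mul_le_mul_of_nonneg_left h1 hμ.le
  have hB := mul_nonneg hμ.le (sq_nonneg (Np - Nv))
  have hC := mul_le_mul_of_nonneg_right hμmi (show (0:ℝ) ≤ Np ^ 2 + Nv ^ 2 by positivity)
  have hD : μ * lam ^ 2 * s ^ 2 = 2 * (R * Ev) * s ^ 2 := by linear_combination s ^ 2 * h2
  nlinarith [hA, hB, hC, hD]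

/-- Core real-arithmetic estimate for the backward `q`-part. -/
private lemma aux_key (mi mm s r R Ev Ip Np Nv Bp B1 I : ℝ)
    (hmm : 0 < mm) (hI : 0 ≤ I) (hIp : 0 ≤ Ip)
    (hs0 : 0 < s) (hs1 : s ≤ 1) (hr0 : 0 < r) (hr1 : r ≤ 1) (hRE0 : 0 ≤ R * Ev)
    (h1 : r * Ev = r * (R * Ev) + Ip)
    (hSRE : R * Ev * s ^ 2 ≤ mi * (Np ^ 2 + Nv ^ 2))
    (hBpsq : mm * Bp ^ 2 = mm + mi * Np ^ 2 / 2 + Ip)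
    (hB1sq : mm * B1 ^ 2 = mm + mi * Nv ^ 2 / 2 + I)
    (hBp1 : 1 ≤ Bp) (hB11 : 1 ≤ B1) :
    Ev / mm ≤ 2 * Bp ^ 2 * B1 ^ 2 / (s ^ 2 * r) := by
  have hrRE : r * (R * Ev) ≤ R * Ev := mul_le_of_le_one_left hRE0 hr1
  have hs2 : s ^ 2 ≤ 1 := pow_le_one₀ hs0.le hs1
  have hA := mul_le_mul_of_nonneg_left hrRE (sq_nonneg s)
  have hBle := mul_le_mul_of_nonneg_right hs2 hIp
  have hC : s ^ 2 * (r * Ev) = s ^ 2 * (r * (R * Ev)) + s ^ 2 * Ip := by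
    linear_combination s ^ 2 * h1
  have hPr : 0 ≤ mm * (Bp ^ 2 - 1) * (B1 ^ 2 - 1) :=
    mul_nonneg (mul_nonneg hmm.le (by nlinarith)) (by nlinarith)
  have hkey : s ^ 2 * (r * Ev) ≤ 2 * mm * (Bp ^ 2 * B1 ^ 2) := by
    nlinarith [hA, hBle, hC, hPr, hSRE, hBpsq, hB1sq, hI, hIp]
  rw [div_le_div_iff₀ hmm (by positivity)]
  nlinarith [hkey]

/-- Core real-arithmetic estimate for the `p`-part. -/
private lemma aux_L2 (mi mj mm Nv Ns t u2 Ev I Is B1 B2 : ℝ)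
    (hmi : 0 < mi) (hmj : 0 < mj) (hmm : 0 < mm) (hI : 0 ≤ I) (hIs : 0 ≤ Is)
    (hnorm : u2 = Nv ^ 2 - 2 * t + Ns ^ 2) (ht : -(Nv * Ns) ≤ t)
    (hEeq : Ev * (2 * (mi + mj)) = mi * mj * u2 + 2 * (mi + mj) * (I + Is))
    (hB1sq : mm * B1 ^ 2 = mm + mi * Nv ^ 2 / 2 + I)
    (hB2sq : mm * B2 ^ 2 = mm + mj * Ns ^ 2 / 2 + Is)
    (hB11 : 1 ≤ B1) (hB21 : 1 ≤ B2) :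
    Ev / mm ≤ B1 ^ 2 * B2 ^ 2 := by
  subst hnorm
  have hM : 0 < mi + mj := by linarith
  have P : mi * mj * (Nv ^ 2 - 2 * t + Ns ^ 2) ≤ (mi + mj) * (mi * Nv ^ 2 + mj * Ns ^ 2) := by
    nlinarith [sq_nonneg (mi * Nv - mj * Ns),
      mul_le_mul_of_nonneg_left ht (mul_pos hmi hmj).le]
  have h2M : Ev * (2 * (mi + mj))
      ≤ (mi * Nv ^ 2 / 2 + mj * Ns ^ 2 / 2 + I + Is) * (2 * (mi + mj)) := by nlinarith [P]
  have hstep : Ev ≤ mi * Nv ^ 2 / 2 + mj * Ns ^ 2 / 2 + I + Is :=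
    le_of_mul_le_mul_right h2M (by linarith : (0:ℝ) < 2 * (mi + mj))
  have hPr : 0 ≤ mm * (B1 ^ 2 - 1) * (B2 ^ 2 - 1) :=
    mul_nonneg (mul_nonneg hmm.le (by nlinarith)) (by nlinarith)
  rw [div_le_iff₀ hmm]
  nlinarith [hPr, hstep, hB1sq, hB2sq]

set_option maxHeartbeats 1000000 in
/-- Lemma 4.4 (backward scattering case): distribution of the kernel
`(E/m)^{γ/2}` among the brackets when `û·σ ≤ 0`. -/
theorem kernel_distribution_backward
    (mi mj mm γ p q : ℝ)
    (hmi : 0 < mi) (hmj : 0 < mj) (hmm : 0 < mm)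
    (hγ0 : 0 ≤ γ) (hγ2 : γ ≤ 2) (hp : 1 ≤ p) (hq : 1 ≤ q) (hpq : 1 / p + 1 / q = 1)
    (v vs : E3) (I Is : ℝ) (hI : 0 ≤ I) (hIs : 0 ≤ Is)
    (σ : E3) (hσ : ‖σ‖ = 1) (r R : ℝ) (hr : r ∈ Ioc (0 : ℝ) 1) (hR : R ∈ Icc (0 : ℝ) 1)
    (hdir : (inner ℝ (v - vs) σ : ℝ) ≤ 0) :
    (EE mi mj v vs I Is / mm) ^ (γ / 2)
      ≤ (Real.sqrt 2 / sbar mi mj) ^ (γ / q) * r ^ (-(γ / (2 * q)))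
        * brk mi mm (vprime mi mj v vs σ I Is R) (Iprime mi mj v vs I Is r R) ^ (γ / q)
        * brk mi mm v I ^ γ * brk mj mm vs Is ^ (γ / p) := by
  have hM : 0 < mi + mj := by linarith
  have hμ : 0 < mi * mj / (mi + mj) := by positivity
  have hE0 : 0 ≤ EE mi mj v vs I Is := by
    have h1 : 0 ≤ mi * mj / (mi + mj) / 2 * ‖v - vs‖ ^ 2 := by positivity
    unfold EE; linarith
  have hIp0 : 0 ≤ Iprime mi mj v vs I Is r R := by
    unfold Iprime
    exact mul_nonneg (mul_nonneg hr.1.le (by linarith [hR.2])) hE0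
  set Ev := EE mi mj v vs I Is with hEvdef
  have hs0 : 0 < sbar mi mj := div_pos (lt_min hmi hmj) hM
  set s := sbar mi mj with hsdef
  have hs1 : s ≤ 1 := by
    rw [hsdef, sbar, div_le_one hM]
    have := min_le_left mi mj; linarith
  have hsmj : s ≤ mj / (mi + mj) := by
    rw [hsdef, sbar]; gcongr; exact min_le_right mi mj
  set lam := Real.sqrt (2 * R * Ev / (mi * mj / (mi + mj))) with hlamdef
  have hlam0 : 0 ≤ lam := Real.sqrt_nonneg _
  have hlam2 : lam ^ 2 = 2 * R * Ev / (mi * mj / (mi + mj)) := by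
    rw [hlamdef]
    exact Real.sq_sqrt (div_nonneg (mul_nonneg (by linarith [hR.1]) hE0) hμ.le)
  have hμlam : (mi * mj / (mi + mj)) * lam ^ 2 = 2 * (R * Ev) := by
    rw [hlam2]; field_simp
  -- notation for norms
  set Np := ‖vprime mi mj v vs σ I Is R‖ with hNpdef
  set Nv := ‖v‖ with hNvdef
  set Ns := ‖vs‖ with hNsdef
  -- inner product of σ with itself
  have hσσ : (inner ℝ σ σ : ℝ) = 1 := by
    rw [real_inner_self_eq_norm_sq, hσ]; norm_num
  -- inner product of v' with σ
  have hva : (inner ℝ (vprime mi mj v vs σ I Is R) σ : ℝ)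
      = mi / (mi + mj) * inner ℝ v σ + mj / (mi + mj) * inner ℝ vs σ
        + mj / (mi + mj) * lam := by
    simp only [vprime, ← hEvdef, ← hlamdef, inner_add_left, real_inner_smul_left, hσσ]
    ring
  -- backward condition gives s * lam ≤ ‖v' - v‖
  have hlow : s * lam ≤ ‖vprime mi mj v vs σ I Is R - v‖ := by
    have hCS := real_inner_le_norm (vprime mi mj v vs σ I Is R - v) σ
    rw [hσ, mul_one, inner_sub_left, hva] at hCS
    have hslam : s * lam ≤ mj / (mi + mj) * lam := mul_le_mul_of_nonneg_right hsmj hlam0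
    have e1 : mi / (mi + mj) * (inner ℝ v σ : ℝ) + mj / (mi + mj) * (inner ℝ vs σ : ℝ)
        - (inner ℝ v σ : ℝ) = -(mj / (mi + mj)) * (inner ℝ (v - vs) σ : ℝ) := by
      rw [inner_sub_left]; field_simp; ring
    have h4 : 0 ≤ mj / (mi + mj) * -(inner ℝ (v - vs) σ : ℝ) :=
      mul_nonneg (div_nonneg hmj.le hM.le) (neg_nonneg.2 hdir)
    linarith [hCS, hslam, e1, h4]
  -- bound on R * Ev
  have hREs : R * Ev * s ^ 2 ≤ mi * (Np ^ 2 + Nv ^ 2) := by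
    have hdiff : ‖vprime mi mj v vs σ I Is R - v‖ ≤ Np + Nv := norm_sub_le _ _
    have h1 : (s * lam) ^ 2 ≤ (Np + Nv) ^ 2 :=
      pow_le_pow_left₀ (mul_nonneg hs0.le hlam0) (hlow.trans hdiff) 2
    have hμmi : mi * mj / (mi + mj) ≤ mi := by
      rw [div_le_iff₀ hM]; nlinarith
    exact aux_RE _ mi s lam R Ev Np Nv hμ hμmi h1 hμlam
  -- bracket squares
  set Bp := brk mi mm (vprime mi mj v vs σ I Is R) (Iprime mi mj v vs I Is r R) with hBpdef
  set B1 := brk mi mm v I with hB1def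
  set B2 := brk mj mm vs Is with hB2def
  have hBpsq : mm * Bp ^ 2 = mm + mi * Np ^ 2 / 2 + Iprime mi mj v vs I Is r R :=
    brk_sq_mul mi mm hmi.le hmm _ _ hIp0
  have hB1sq : mm * B1 ^ 2 = mm + mi * Nv ^ 2 / 2 + I := brk_sq_mul mi mm hmi.le hmm v I hI
  have hB2sq : mm * B2 ^ 2 = mm + mj * Ns ^ 2 / 2 + Is := brk_sq_mul mj mm hmj.le hmm vs Is hIs
  have hBp1 : 1 ≤ Bp := brk_one_le mi mm hmi.le hmm _ _ hIp0
  have hB11 : 1 ≤ B1 := brk_one_le mi mm hmi.le hmm v I hI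
  have hB21 : 1 ≤ B2 := brk_one_le mj mm hmj.le hmm vs Is hIs
  -- the two divided bounds
  have hXle2 : Ev / mm ≤ 2 * Bp ^ 2 * B1 ^ 2 / (s ^ 2 * r) := by
    refine aux_key mi mm s r R Ev (Iprime mi mj v vs I Is r R) Np Nv Bp B1 I hmm hI hIp0
      hs0 hs1 hr.1 hr.2 (mul_nonneg hR.1 hE0) ?_ hREs hBpsq hB1sq hBp1 hB11
    unfold Iprime; rw [← hEvdef]; ring
  have hXle1 : Ev / mm ≤ B1 ^ 2 * B2 ^ 2 := by
    refine aux_L2 mi mj mm Nv Ns (inner ℝ v vs) (‖v - vs‖ ^ 2) Ev I Is B1 B2 hmi hmj hmm hI hIs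
      (norm_sub_sq_real v vs) ?_ ?_ hB1sq hB2sq hB11 hB21
    · have h1 := abs_real_inner_le_norm v vs
      have h2 := neg_abs_le (inner ℝ v vs : ℝ)
      linarith
    · rw [hEvdef]; unfold EE; field_simp; ring
  have hX0 : 0 ≤ Ev / mm := div_nonneg hE0 hmm.le
  -- dispose of the trivial case γ = 0
  rcases hγ0.eq_or_lt with h0 | hγpos
  · rw [← h0]
    simp [Real.rpow_zero]
  -- positivity facts
  have hp0 : 0 < p := by linarith
  have hq0 : 0 < q := by linarith
  have hr0 : 0 < r := hr.1
  have he1 : 0 ≤ γ / (2 * q) := by positivity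
  have he2 : 0 ≤ γ / (2 * p) := by positivity
  have hsplit : γ / (2 * q) + γ / (2 * p) = γ / 2 := by
    linear_combination (γ / 2) * hpq
  have hsum : γ / q + γ / p = γ := by
    linear_combination γ * hpq
  have hBp0 : (0:ℝ) ≤ Bp := by linarith
  have hB10 : (0:ℝ) ≤ B1 := by linarith
  have hB20 : (0:ℝ) ≤ B2 := by linarith
  have hc0 : (0:ℝ) ≤ Real.sqrt 2 / s := div_nonneg (Real.sqrt_nonneg 2) hs0.le
  have hfactor : 2 * Bp ^ 2 * B1 ^ 2 / (s ^ 2 * r)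
      = (Real.sqrt 2 / s) ^ 2 * Bp ^ 2 * B1 ^ 2 * r⁻¹ := by
    rw [div_pow, Real.sq_sqrt (by norm_num : (0:ℝ) ≤ 2)]
    field_simp
  have step1 : (Ev / mm) ^ (γ / 2) = (Ev / mm) ^ (γ / (2 * q)) * (Ev / mm) ^ (γ / (2 * p)) := by
    rw [← hsplit, Real.rpow_add' hX0 (by rw [hsplit]; exact ne_of_gt (by positivity))]
  have step2 : (Ev / mm) ^ (γ / (2 * q)) ≤ (2 * Bp ^ 2 * B1 ^ 2 / (s ^ 2 * r)) ^ (γ / (2 * q)) :=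
    Real.rpow_le_rpow hX0 hXle2 he1
  have step3 : (Ev / mm) ^ (γ / (2 * p)) ≤ (B1 ^ 2 * B2 ^ 2) ^ (γ / (2 * p)) :=
    Real.rpow_le_rpow hX0 hXle1 he2
  have expand2 : (2 * Bp ^ 2 * B1 ^ 2 / (s ^ 2 * r)) ^ (γ / (2 * q))
      = (Real.sqrt 2 / s) ^ (γ / q) * r ^ (-(γ / (2 * q))) * Bp ^ (γ / q) * B1 ^ (γ / q) := by
    rw [hfactor, Real.mul_rpow (by positivity) (inv_nonneg.2 hr0.le),
      Real.mul_rpow (by positivity) (sq_nonneg B1),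
      Real.mul_rpow (sq_nonneg _) (sq_nonneg Bp),
      rpow_sq_eq _ hc0, rpow_sq_eq _ hBp0, rpow_sq_eq _ hB10,
      Real.inv_rpow hr0.le, ← Real.rpow_neg hr0.le]
    rw [show 2 * (γ / (2 * q)) = γ / q by ring]
    ring
  have expand3 : (B1 ^ 2 * B2 ^ 2) ^ (γ / (2 * p)) = B1 ^ (γ / p) * B2 ^ (γ / p) := by
    rw [Real.mul_rpow (sq_nonneg _) (sq_nonneg _), rpow_sq_eq _ hB10, rpow_sq_eq _ hB20,
      show 2 * (γ / (2 * p)) = γ / p by ring]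
  have hmerge : B1 ^ (γ / q) * B1 ^ (γ / p) = B1 ^ γ := by
    rw [← Real.rpow_add (by linarith : (0:ℝ) < B1), hsum]
  calc (Ev / mm) ^ (γ / 2)
      = (Ev / mm) ^ (γ / (2 * q)) * (Ev / mm) ^ (γ / (2 * p)) := step1
    _ ≤ (2 * Bp ^ 2 * B1 ^ 2 / (s ^ 2 * r)) ^ (γ / (2 * q)) * (B1 ^ 2 * B2 ^ 2) ^ (γ / (2 * p)) :=
        mul_le_mul step2 step3 (Real.rpow_nonneg hX0 _) (Real.rpow_nonneg (by positivity) _)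
    _ = (Real.sqrt 2 / s) ^ (γ / q) * r ^ (-(γ / (2 * q))) * Bp ^ (γ / q)
        * B1 ^ γ * B2 ^ (γ / p) := by
        rw [expand2, expand3, ← hmerge]; ring
end
end

section
/- Fix v_* ∈ ℝ³, I_* ∈ [0,∞), σ ∈ 𝕊², r ∈ [0,1] and R ∈ [0,1], and define Φ : ℝ³×ℝ → ℝ³×ℝ by Φ(v,I) = (v',I') with v' = V + (m_j/M)√(2RE/μ) σ and I' = r(1−R)E, where V = (m_i v + m_j v_*)/M and E = (μ/2)|v−v_*|² + I + I_*. Then at every point (v,I) with E > 0 the map Φ is differentiable and the absolute value of the determinant of its derivative equals (m_i/M)³ · r(1−R). -/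
open MeasureTheory Real Set
open scoped ENNReal Classical

noncomputable section

/-- Jacobian (4.15): the change of variables `(v,I) ↦ (v',I')` has Jacobian
`(m_i/(m_i+m_j))³ r(1-R)` wherever `E > 0`. -/
theorem jacobian_change_of_variables_vI
    (mi mj : ℝ) (hmi : 0 < mi) (hmj : 0 < mj)
    (vs : E3) (Is : ℝ) (hIs : 0 ≤ Is) (σ : E3) (hσ : ‖σ‖ = 1)
    (r R : ℝ) (hr : r ∈ Icc (0 : ℝ) 1) (hR : R ∈ Icc (0 : ℝ) 1)
    (Φ : E3 × ℝ → E3 × ℝ)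
    (hΦ : Φ = fun p => (vprime mi mj p.1 vs σ p.2 Is R, Iprime mi mj p.1 vs p.2 Is r R))
    (p : E3 × ℝ) (hE : 0 < EE mi mj p.1 vs p.2 Is) :
    DifferentiableAt ℝ Φ p ∧
      |(fderiv ℝ Φ p).det| = (mi / (mi + mj)) ^ 3 * (r * (1 - R)) := by

  have hM : (0:ℝ) < mi + mj := by positivity
  set μv : ℝ := mi * mj / (mi + mj) with hμvdef
  have hμv : 0 < μv := by positivity
  set a : ℝ := mi / (mi + mj) with hadef
  have ha : 0 < a := by positivity
  set u : E3 := p.1 - vs with hu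
  set DE : (E3 × ℝ) →L[ℝ] ℝ :=
    μv • ((innerSL ℝ u).comp (ContinuousLinearMap.fst ℝ E3 ℝ)) + ContinuousLinearMap.snd ℝ E3 ℝ
    with hDE
  have hDEapp : ∀ w : E3 × ℝ, DE w = μv * inner ℝ u w.1 + w.2 := by
    intro w; simp [hDE]
  -- derivative of the energy
  have hEder : HasFDerivAt (fun q : E3 × ℝ => EE mi mj q.1 vs q.2 Is) DE p := by
    have h0 : HasFDerivAt (fun q : E3 × ℝ => q.1 - vs)
        (ContinuousLinearMap.fst ℝ E3 ℝ) p :=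
      (ContinuousLinearMap.fst ℝ E3 ℝ).hasFDerivAt.sub_const vs
    have h1 := h0.norm_sq
    have h2 := ((h1.const_mul (μv / 2)).add ((ContinuousLinearMap.snd ℝ E3 ℝ).hasFDerivAt)).add_const Is
    have h3 : (fun q : E3 × ℝ => μv / 2 * ‖q.1 - vs‖ ^ 2 + (ContinuousLinearMap.snd ℝ E3 ℝ) q + Is)
        = fun q : E3 × ℝ => EE mi mj q.1 vs q.2 Is := by
      funext q; simp [EE, hμvdef]
    simp only [Pi.add_apply] at h2
    rw [h3] at h2
    refine h2.congr_fderiv ?_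
    ext w
    · simp [hDE, hu]
      ring
    · simp [hDE]
  set Ep : ℝ := EE mi mj p.1 vs p.2 Is with hEp
  set s : ℝ := Real.sqrt (2 * R * Ep / μv) with hs
  set cc : ℝ := R / (μv * s) with hcc
  -- derivative of the square root term
  have hsq : HasFDerivAt (fun q : E3 × ℝ =>
      Real.sqrt (2 * R * EE mi mj q.1 vs q.2 Is / μv)) (cc • DE) p := by
    rcases eq_or_lt_of_le hR.1 with hR0 | hR0
    · have hfun : (fun q : E3 × ℝ => Real.sqrt (2 * R * EE mi mj q.1 vs q.2 Is / μv))
          = fun _ => (0:ℝ) := by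
        funext q; rw [← hR0]; simp
      have hc0 : cc = 0 := by rw [hcc, ← hR0]; simp
      rw [hfun, hc0, zero_smul]
      exact hasFDerivAt_const 0 p
    · have harg : 0 < 2 * R * Ep / μv := by positivity
      have hspos : 0 < s := Real.sqrt_pos.mpr harg
      have hin : HasFDerivAt (fun q : E3 × ℝ => 2 * R * EE mi mj q.1 vs q.2 Is / μv)
          ((2 * R / μv) • DE) p := by
        have hfe : (fun q : E3 × ℝ => 2 * R * EE mi mj q.1 vs q.2 Is / μv)
            = fun q : E3 × ℝ => (2 * R / μv) * EE mi mj q.1 vs q.2 Is := by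
          funext q; ring
        rw [hfe]
        exact hEder.const_mul (2 * R / μv)
      have hder := hin.sqrt (by rw [← hEp]; positivity)
      rw [← hEp, ← hs, smul_smul] at hder
      have hceq : cc = 1 / (2 * s) * (2 * R / μv) := by
        have hspos : s ≠ 0 := ne_of_gt (Real.sqrt_pos.mpr harg)
        rw [hcc]
        field_simp
      rw [hceq]
      exact hder
  -- derivative of the first component
  set L1 : (E3 × ℝ) →L[ℝ] E3 :=
    a • ContinuousLinearMap.fst ℝ E3 ℝ +
      ((mj / (mi + mj)) • (cc • DE)).smulRight σ with hL1
  have hΦ1 : HasFDerivAt (fun q : E3 × ℝ => vprime mi mj q.1 vs σ q.2 Is R) L1 p := by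
    have h1 : HasFDerivAt (fun q : E3 × ℝ => (mi / (mi + mj)) • q.1 + (mj / (mi + mj)) • vs)
        (a • ContinuousLinearMap.fst ℝ E3 ℝ) p :=
      ((ContinuousLinearMap.fst ℝ E3 ℝ).hasFDerivAt.const_smul a).add_const _
    have h2 := (hsq.const_mul (mj / (mi + mj))).smul_const σ
    have := h1.add h2
    exact this
  set ρ : ℝ := r * (1 - R) with hρ
  have hρ0 : 0 ≤ ρ := mul_nonneg hr.1 (by linarith [hR.2])
  set L2 : (E3 × ℝ) →L[ℝ] ℝ := ρ • DE with hL2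
  have hΦ2 : HasFDerivAt (fun q : E3 × ℝ => Iprime mi mj q.1 vs q.2 Is r R) L2 p := by
    have := hEder.const_mul ρ
    exact this
  have hL : HasFDerivAt Φ (L1.prod L2) p := by
    rw [hΦ]; exact hΦ1.prodMk hΦ2
  refine ⟨hL.differentiableAt, ?_⟩
  rw [hL.fderiv]
  -- compute the determinant via an explicit matrix
  set c : ℝ := mj / (mi + mj) * cc with hc
  have hLapp : ∀ w : E3 × ℝ, (L1.prod L2) w
      = (a • w.1 + (c * (μv * inner ℝ u w.1 + w.2)) • σ, ρ * (μv * inner ℝ u w.1 + w.2)) := by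
    intro w
    simp only [hL1, hL2, hDE, hc, ContinuousLinearMap.prod_apply, ContinuousLinearMap.add_apply,
      ContinuousLinearMap.coe_smul', Pi.smul_apply, ContinuousLinearMap.coe_fst',
      ContinuousLinearMap.smulRight_apply, ContinuousLinearMap.coe_comp',
      Function.comp_apply, ContinuousLinearMap.coe_snd', innerSL_apply_apply, smul_eq_mul,
      Prod.mk.injEq]
    constructor
    · congr 1
      ring
    · trivial
  let b : Module.Basis (Fin 3) ℝ E3 := (EuclideanSpace.basisFun (Fin 3) ℝ).toBasis
  let B : Module.Basis (Fin 3 ⊕ Unit) ℝ (E3 × ℝ) := b.prod (Module.Basis.singleton Unit ℝ)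
  have hdet : (L1.prod L2).det = a ^ 3 * ρ := by
    have h1 : (L1.prod L2).det
        = (LinearMap.toMatrix B B ((L1.prod L2) : (E3 × ℝ) →ₗ[ℝ] (E3 × ℝ))).det := by
      rw [LinearMap.det_toMatrix]
    set Mt : Matrix (Fin 3 ⊕ Unit) (Fin 3 ⊕ Unit) ℝ := Matrix.of (fun i j =>
      Sum.elim
        (fun i' => Sum.elim
          (fun j' => (if j' = i' then a else 0) + c * (μv * u j') * σ i')
          (fun _ => c * σ i') j)
        (fun _ => Sum.elim (fun j' => ρ * (μv * u j')) (fun _ => ρ) j) i) with hMt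
    have hbs : ∀ j' : Fin 3, b j' = EuclideanSpace.single j' (1:ℝ) := by
      intro j'
      simp [b, EuclideanSpace.basisFun_apply]
    have hib : ∀ j' : Fin 3, (inner ℝ u (b j') : ℝ) = u j' := by
      intro j'
      rw [hbs, EuclideanSpace.inner_single_right]
      simp
    have hbc : ∀ (x : E3) (i' : Fin 3), b.repr x i' = x i' := by
      intro x i'
      simp [b, EuclideanSpace.basisFun_repr]
    have hba : ∀ j' i' : Fin 3, (b j') i' = if j' = i' then (1:ℝ) else 0 := by
      intro j' i'
      rw [hbs, EuclideanSpace.single_apply]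
      simp [eq_comm]
    have hmt : LinearMap.toMatrix B B ((L1.prod L2) : (E3 × ℝ) →ₗ[ℝ] (E3 × ℝ)) = Mt := by
      ext i j
      have hBinl : ∀ j' : Fin 3, B (Sum.inl j') = (b j', 0) := fun j' =>
        Prod.ext (Module.Basis.prod_apply_inl_fst _ _ _) (Module.Basis.prod_apply_inl_snd _ _ _)
      have hBinr : B (Sum.inr ()) = (0, 1) := by
        refine Prod.ext (Module.Basis.prod_apply_inr_fst _ _ _) ?_
        rw [Module.Basis.prod_apply_inr_snd, Module.Basis.singleton_apply]
      cases i with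
      | inl i' =>
        cases j with
        | inl j' =>
          rw [LinearMap.toMatrix_apply]
          simp only [ContinuousLinearMap.coe_coe, hBinl, hLapp, hMt, Matrix.of_apply,
            Sum.elim_inl, B, Module.Basis.prod_repr_inl, Module.Basis.prod_repr_inr]
          simp only [hbc, PiLp.add_apply, PiLp.smul_apply, smul_eq_mul, hib, hba, add_zero]
          split <;> ring
        | inr j' =>
          rw [LinearMap.toMatrix_apply]
          simp only [ContinuousLinearMap.coe_coe, hBinr, hLapp, hMt, Matrix.of_apply,
            Sum.elim_inl, Sum.elim_inr, B, Module.Basis.prod_repr_inl]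
          simp only [hbc, PiLp.add_apply, PiLp.smul_apply, smul_eq_mul,
            inner_zero_right, mul_zero, zero_add, mul_one, smul_zero]
      | inr i' =>
        cases j with
        | inl j' =>
          rw [LinearMap.toMatrix_apply]
          simp only [ContinuousLinearMap.coe_coe, hBinl, hLapp, hMt, Matrix.of_apply,
            Sum.elim_inl, Sum.elim_inr, B, Module.Basis.prod_repr_inr, Module.Basis.singleton_repr]
          simp [hib]
        | inr j' =>
          rw [LinearMap.toMatrix_apply]
          simp only [ContinuousLinearMap.coe_coe, hBinr, hLapp, hMt, Matrix.of_apply,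
            Sum.elim_inr, B, Module.Basis.prod_repr_inr, Module.Basis.singleton_repr]
          simp
    have hfact : Mt =
        Matrix.fromBlocks (a • (1 : Matrix (Fin 3) (Fin 3) ℝ))
          (Matrix.of fun i (_ : Unit) => c * σ i)
          (0 : Matrix Unit (Fin 3) ℝ) (Matrix.of fun (_ : Unit) (_ : Unit) => ρ) *
        Matrix.fromBlocks (1 : Matrix (Fin 3) (Fin 3) ℝ) (0 : Matrix (Fin 3) Unit ℝ)
          (Matrix.of fun (_ : Unit) j => μv * u j) (1 : Matrix Unit Unit ℝ) := by
      ext i j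
      cases i with
      | inl i' =>
        cases j with
        | inl j' =>
          simp [hMt, Matrix.mul_apply, Fintype.sum_sum_type, Matrix.fromBlocks,
            Matrix.one_apply, Finset.mul_sum, Finset.sum_ite_eq, Finset.sum_ite_eq']
          rcases eq_or_ne i' j' with h | h
          · subst h
            simp
            ring
          · simp [h, Ne.symm h]
            ring
        | inr j' =>
          simp [hMt, Matrix.mul_apply, Fintype.sum_sum_type, Matrix.fromBlocks,
            Matrix.one_apply]
      | inr i' =>
        cases j with
        | inl j' =>
          simp [hMt, Matrix.mul_apply, Fintype.sum_sum_type, Matrix.fromBlocks,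
            Matrix.one_apply, Finset.sum_ite_eq, Finset.sum_ite_eq']
        | inr j' =>
          simp [hMt, Matrix.mul_apply, Fintype.sum_sum_type, Matrix.fromBlocks,
            Matrix.one_apply]
    rw [h1, hmt, hfact, Matrix.det_mul, Matrix.det_fromBlocks_zero₂₁,
      Matrix.det_fromBlocks_zero₁₂, Matrix.det_smul, Matrix.det_one, Matrix.det_one]
    simp [Matrix.det_unique]
  rw [hdet, abs_of_nonneg (mul_nonneg (by positivity) hρ0), hρ, hadef]
end
end

section
/- Fix v ∈ ℝ³, I ∈ [0,∞), σ ∈ 𝕊², r ∈ [0,1] and R ∈ [0,1], and define Ψ : ℝ³×ℝ → ℝ³×ℝ by Ψ(v_*,I_*) = (v',I') with v' = V + (m_j/M)√(2RE/μ) σ and I' = r(1−R)E, where V = (m_i v + m_j v_*)/M and E = (μ/2)|v−v_*|² + I + I_*. Then at every point (v_*,I_*) with E > 0 the map Ψ is differentiable and the absolute value of the determinant of its derivative equals (m_j/M)³ · r(1−R). -/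
open MeasureTheory Real Set
open scoped ENNReal Classical

noncomputable section

section JacAux

/-- Reindexing equivalence used for the Jacobian computation. -/
def jacAuxE4 : Fin 3 ⊕ Unit ≃ Fin 4 where
  toFun x := Sum.elim (Fin.castLE (by omega)) (fun _ => 3) x
  invFun j := if h : (j : ℕ) < 3 then Sum.inl ⟨j, h⟩ else Sum.inr ()
  left_inv := by decide
  right_inv := by decide

/-- Product basis of `ℝ³ × ℝ`. -/
def jacAuxBasis : Module.Basis (Fin 3 ⊕ Unit) ℝ (E3 × ℝ) :=
  (EuclideanSpace.basisFun (Fin 3) ℝ).toBasis.prod (Module.Basis.singleton Unit ℝ)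

/-- Determinant of a linear map of the form
`δ ↦ (α δ₁ + β(⟨w,δ₁⟩+δ₂)σ, c(⟨w,δ₁⟩+δ₂))`. -/
theorem jacAux_det (Lc : (E3 × ℝ) →L[ℝ] (E3 × ℝ)) (α β c : ℝ) (w σ : E3)
    (hL : ∀ δ : E3 × ℝ, Lc δ =
      (α • δ.1 + (β * (inner ℝ w δ.1 + δ.2)) • σ, c * (inner ℝ w δ.1 + δ.2))) :
    Lc.det = α ^ 3 * c := by
  have hdet : Lc.det = LinearMap.det (Lc : (E3 × ℝ) →ₗ[ℝ] (E3 × ℝ)) := rfl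
  rw [hdet, ← LinearMap.det_toMatrix jacAuxBasis]
  have hM : LinearMap.toMatrix jacAuxBasis jacAuxBasis (Lc : (E3 × ℝ) →ₗ[ℝ] (E3 × ℝ)) =
      Matrix.of (fun i j => match i, j with
        | Sum.inl i, Sum.inl k => (if i = k then α else 0) + β * w k * σ i
        | Sum.inl i, Sum.inr _ => β * σ i
        | Sum.inr _, Sum.inl k => c * w k
        | Sum.inr _, Sum.inr _ => c) := by
    have h1 : ∀ k, (jacAuxBasis (Sum.inl k)).1 = EuclideanSpace.single k 1 := by
      intro k
      rw [jacAuxBasis, Module.Basis.prod_apply_inl_fst]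
      simp [EuclideanSpace.basisFun_apply]
    have h2 : ∀ k, (jacAuxBasis (Sum.inl k)).2 = 0 := fun k => Module.Basis.prod_apply_inl_snd _ _ _
    have h3 : (jacAuxBasis (Sum.inr ())).1 = 0 := Module.Basis.prod_apply_inr_fst _ _ _
    have h4 : (jacAuxBasis (Sum.inr ())).2 = 1 := by
      rw [jacAuxBasis, Module.Basis.prod_apply_inr_snd, Module.Basis.singleton_apply]
    ext i j
    rw [LinearMap.toMatrix_apply, ContinuousLinearMap.coe_coe, hL]
    cases i with
    | inl i =>
      rw [show ∀ x : E3 × ℝ, jacAuxBasis.repr x (Sum.inl i) = x.1 i from fun x => rfl]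
      cases j with
      | inl k =>
        simp [h1, h2, EuclideanSpace.single_apply, real_inner_comm,
          EuclideanSpace.inner_single_left, EuclideanSpace.inner_single_right, eq_comm]
      | inr u => simp [h3, h4]
    | inr u =>
      rw [show ∀ x : E3 × ℝ, jacAuxBasis.repr x (Sum.inr u) = x.2 from fun x => by
        rw [jacAuxBasis, Module.Basis.prod_repr_inr, Module.Basis.singleton_repr]]
      cases j with
      | inl k => simp [h1, h2, EuclideanSpace.inner_single_left, EuclideanSpace.inner_single_right, real_inner_comm]
      | inr u' => simp [h3, h4]
  rw [hM, ← Matrix.det_submatrix_equiv_self jacAuxE4.symm]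
  rw [show ∀ M : Matrix (Fin 3 ⊕ Unit) (Fin 3 ⊕ Unit) ℝ,
    M.submatrix jacAuxE4.symm jacAuxE4.symm =
      !![M (Sum.inl 0) (Sum.inl 0), M (Sum.inl 0) (Sum.inl 1),
           M (Sum.inl 0) (Sum.inl 2), M (Sum.inl 0) (Sum.inr ());
         M (Sum.inl 1) (Sum.inl 0), M (Sum.inl 1) (Sum.inl 1),
           M (Sum.inl 1) (Sum.inl 2), M (Sum.inl 1) (Sum.inr ());
         M (Sum.inl 2) (Sum.inl 0), M (Sum.inl 2) (Sum.inl 1),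
           M (Sum.inl 2) (Sum.inl 2), M (Sum.inl 2) (Sum.inr ());
         M (Sum.inr ()) (Sum.inl 0), M (Sum.inr ()) (Sum.inl 1),
           M (Sum.inr ()) (Sum.inl 2), M (Sum.inr ()) (Sum.inr ())]
    from fun M => by ext i j; fin_cases i <;> fin_cases j <;> rfl]
  simp only [Matrix.of_apply]
  simp [Matrix.det_succ_row_zero, Fin.sum_univ_succ, Fin.succAbove, Fin.ext_iff]
  ring

end JacAux

/-- Jacobian (4.20): the change of variables `(v_*,I_*) ↦ (v',I')` has Jacobian
`(m_j/(m_i+m_j))³ r(1-R)` wherever `E > 0`. -/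
theorem jacobian_change_of_variables_vsIs
    (mi mj : ℝ) (hmi : 0 < mi) (hmj : 0 < mj)
    (v : E3) (I : ℝ) (hI : 0 ≤ I) (σ : E3) (hσ : ‖σ‖ = 1)
    (r R : ℝ) (hr : r ∈ Icc (0 : ℝ) 1) (hR : R ∈ Icc (0 : ℝ) 1)
    (Ψ : E3 × ℝ → E3 × ℝ)
    (hΨ : Ψ = fun p => (vprime mi mj v p.1 σ I p.2 R, Iprime mi mj v p.1 I p.2 r R))
    (p : E3 × ℝ) (hE : 0 < EE mi mj v p.1 I p.2) :
    DifferentiableAt ℝ Ψ p ∧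
      |(fderiv ℝ Ψ p).det| = (mj / (mi + mj)) ^ 3 * (r * (1 - R)) := by
  have hM : 0 < mi + mj := by positivity
  have hμ : 0 < mi * mj / (mi + mj) := by positivity
  set μ' : ℝ := mi * mj / (mi + mj) with hμ'
  set c2 : ℝ := 2 * R / μ' with hc2
  have hE' : HasFDerivAt (fun q : E3 × ℝ => EE mi mj v q.1 I q.2)
      ((mi * mj / (mi + mj) / 2) •
          (2 • (innerSL ℝ (v - p.1)).comp
            ((0 : (E3 × ℝ) →L[ℝ] E3) - ContinuousLinearMap.fst ℝ E3 ℝ)) +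
        ContinuousLinearMap.snd ℝ E3 ℝ) p := by
    have h1 := (((hasFDerivAt_const v p).sub (hasFDerivAt_fst)).norm_sq.const_mul
      (mi * mj / (mi + mj) / 2)).add_const I
    exact h1.add (hasFDerivAt_snd)
  have hfun1 : (fun q : E3 × ℝ => vprime mi mj v q.1 σ I q.2 R)
      = fun q => ((mi / (mi + mj)) • v + (mj / (mi + mj)) • q.1)
        + ((mj / (mi + mj)) * Real.sqrt (c2 * EE mi mj v q.1 I q.2)) • σ := by
    funext q
    have : 2 * R * EE mi mj v q.1 I q.2 / (mi * mj / (mi + mj))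
        = c2 * EE mi mj v q.1 I q.2 := by rw [hc2, ← hμ']; ring
    rw [vprime, this]
  have h2 := hE'.const_mul (r * (1 - R))
  have hfst : HasFDerivAt (fun q : E3 × ℝ => q.1) (ContinuousLinearMap.fst ℝ E3 ℝ) p :=
    hasFDerivAt_fst
  have hbase := (hasFDerivAt_const ((mi / (mi + mj)) • v) p).add
    (hfst.const_smul (mj / (mi + mj)))
  have key : ∃ (D : (E3 × ℝ) →L[ℝ] (E3 × ℝ)) (β : ℝ), HasFDerivAt Ψ D p ∧
      ∀ δ : E3 × ℝ, D δ = ((mj / (mi + mj)) • δ.1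
          + (β * (inner ℝ ((mi * mj / (mi + mj)) • (p.1 - v)) δ.1 + δ.2)) • σ,
        (r * (1 - R)) * (inner ℝ ((mi * mj / (mi + mj)) • (p.1 - v)) δ.1 + δ.2)) := by
    rcases eq_or_lt_of_le hR.1 with hR0 | hRpos
    · -- R = 0
      have ht : HasFDerivAt
          (fun q : E3 × ℝ => (mj / (mi + mj)) * Real.sqrt (c2 * EE mi mj v q.1 I q.2))
          (0 : (E3 × ℝ) →L[ℝ] ℝ) p := by
        have heq : (fun q : E3 × ℝ =>
            (mj / (mi + mj)) * Real.sqrt (c2 * EE mi mj v q.1 I q.2))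
            = fun _ => (mj / (mi + mj)) * Real.sqrt 0 := by
          funext q
          rw [hc2, ← hR0]
          norm_num
        rw [heq]
        exact hasFDerivAt_const _ _
      have h1 := hbase.add (ht.smul_const σ)
      simp only [Pi.add_def, Pi.smul_def] at h1
      rw [← hfun1] at h1
      refine ⟨_, 0, by rw [hΨ]; exact HasFDerivAt.prodMk h1 h2, fun δ => ?_⟩
      simp only [ContinuousLinearMap.prod_apply, ContinuousLinearMap.add_apply,
        ContinuousLinearMap.coe_smul', Pi.smul_apply, ContinuousLinearMap.smulRight_apply,
        ContinuousLinearMap.zero_apply, ContinuousLinearMap.coe_fst',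
        ContinuousLinearMap.coe_snd', ContinuousLinearMap.coe_comp',
        ContinuousLinearMap.coe_sub', Function.comp_apply, Pi.sub_apply,
        Pi.zero_apply, innerSL_apply_apply, ContinuousLinearMap.smul_apply]
      refine Prod.ext ?_ ?_
      · simp only [zero_mul, zero_smul, zero_add, add_zero, smul_eq_mul]
      · simp only [smul_eq_mul]
        have hw : inner ℝ ((mi * mj / (mi + mj)) • (p.1 - v)) δ.1
            = (mi * mj / (mi + mj)) * ((inner ℝ p.1 δ.1 : ℝ) - (inner ℝ v δ.1 : ℝ)) := by
          rw [real_inner_smul_left, inner_sub_left]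
        rw [hw]
        have h3 : (inner ℝ (v - p.1) ((0:E3) - δ.1) : ℝ)
            = -((inner ℝ v δ.1 : ℝ) - (inner ℝ p.1 δ.1 : ℝ)) := by
          rw [zero_sub, inner_neg_right, inner_sub_left]
        rw [h3]; ring
    · -- R > 0
      have hX : 0 < c2 * EE mi mj v p.1 I p.2 := by
        apply mul_pos _ hE
        rw [hc2]; positivity
      have hsq := (Real.hasDerivAt_sqrt (ne_of_gt hX)).comp_hasFDerivAt p
        (hE'.const_mul c2)
      have ht := hsq.const_mul (mj / (mi + mj))
      have h1 := hbase.add (ht.smul_const σ)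
      simp only [Function.comp_def, Pi.add_def, Pi.smul_def] at h1
      rw [← hfun1] at h1
      refine ⟨_, (mj / (mi + mj)) *
          (1 / (2 * Real.sqrt (c2 * EE mi mj v p.1 I p.2)) * c2),
        by rw [hΨ]; exact HasFDerivAt.prodMk h1 h2, fun δ => ?_⟩
      simp only [ContinuousLinearMap.prod_apply, ContinuousLinearMap.add_apply,
        ContinuousLinearMap.coe_smul', Pi.smul_apply, ContinuousLinearMap.smulRight_apply,
        ContinuousLinearMap.zero_apply, ContinuousLinearMap.coe_fst',
        ContinuousLinearMap.coe_snd', ContinuousLinearMap.coe_comp',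
        ContinuousLinearMap.coe_sub', Function.comp_apply, Pi.sub_apply,
        Pi.zero_apply, innerSL_apply_apply, ContinuousLinearMap.smul_apply]
      have hw : inner ℝ ((mi * mj / (mi + mj)) • (p.1 - v)) δ.1
          = (mi * mj / (mi + mj)) * ((inner ℝ p.1 δ.1 : ℝ) - (inner ℝ v δ.1 : ℝ)) := by
        rw [real_inner_smul_left, inner_sub_left]
      have h3 : (inner ℝ (v - p.1) ((0:E3) - δ.1) : ℝ)
          = -((inner ℝ v δ.1 : ℝ) - (inner ℝ p.1 δ.1 : ℝ)) := by
        rw [zero_sub, inner_neg_right, inner_sub_left]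
      refine Prod.ext ?_ ?_
      · simp only [zero_add, smul_eq_mul]
        congr 1
        rw [hw, h3]
        ring
      · simp only [smul_eq_mul]
        rw [hw, h3]
        ring
  obtain ⟨D, β, hΨd, hL⟩ := key
  refine ⟨hΨd.differentiableAt, ?_⟩
  rw [hΨd.fderiv]
  rw [jacAux_det D (mj / (mi + mj)) β (r * (1 - R))
    ((mi * mj / (mi + mj)) • (p.1 - v)) σ hL]
  exact abs_of_nonneg (mul_nonneg (by positivity)
    (mul_nonneg hr.1 (by linarith [hR.2])))
end
end

section
/- For every a ∈ [0,1] and every measurable function b : [0,1] → [0,∞], one has ∫_{[a,1)} b( (y−a)/√(1 + a² − 2ay) ) dy ≤ √2 · ∫_{[0,1]} b(x) dx. (For y ∈ [a,1) with a ∈ [0,1] one has 1 + a² − 2ay > 0 and (y−a)/√(1+a²−2ay) ∈ [0,1], so the integrand is well defined.) -/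
open MeasureTheory Real Set
open scoped ENNReal Classical

noncomputable section

/-- One-dimensional change of variables estimate: the Jacobian of
`y ↦ (y-a)/√(1+a²-2ay)` is bounded by `√2`. -/
theorem angular_change_of_variables_bound
    (a : ℝ) (ha : a ∈ Icc (0 : ℝ) 1) (b : ℝ → ℝ≥0∞) (hb : Measurable b) :
    (∫⁻ y in Ico a 1, b ((y - a) / Real.sqrt (1 + a ^ 2 - 2 * a * y)))
      ≤ ENNReal.ofReal (Real.sqrt 2) * ∫⁻ x in Icc (0 : ℝ) 1, b x := by
  obtain ⟨ha0, ha1⟩ := ha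
  set f : ℝ → ℝ := fun y => (y - a) / Real.sqrt (1 + a ^ 2 - 2 * a * y) with hfdef
  set f' : ℝ → ℝ := fun y => (1 - a * y) / Real.sqrt (1 + a ^ 2 - 2 * a * y) ^ 3 with hf'def
  have hd : ∀ y ∈ Ico a 1, 0 < 1 + a ^ 2 - 2 * a * y := by
    intro y hy
    rcases hy with ⟨hya, hy1⟩
    nlinarith [sq_nonneg (1 - a)]
  have hderiv : ∀ y ∈ Ico a 1, HasDerivAt f (f' y) y := by
    intro y hy
    have hdy := hd y hy
    have hs : Real.sqrt (1 + a ^ 2 - 2 * a * y) > 0 := Real.sqrt_pos.mpr hdy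
    have h1 : HasDerivAt (fun y : ℝ => 1 + a ^ 2 - 2 * a * y) (-(2 * a)) y := by
      simpa using ((hasDerivAt_id y).const_mul (2 * a)).const_sub (1 + a ^ 2)
    have h2 : HasDerivAt (fun y : ℝ => Real.sqrt (1 + a ^ 2 - 2 * a * y))
        (1 / (2 * Real.sqrt (1 + a ^ 2 - 2 * a * y)) * (-(2 * a))) y :=
      (Real.hasDerivAt_sqrt (ne_of_gt hdy)).comp y h1
    have h3 : HasDerivAt (fun y : ℝ => y - a) 1 y := (hasDerivAt_id y).sub_const a
    have h4 := h3.div h2 (ne_of_gt hs)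
    refine h4.congr_deriv ?_
    have hs2 : Real.sqrt (1 + a ^ 2 - 2 * a * y) ^ 2 = 1 + a ^ 2 - 2 * a * y :=
      Real.sq_sqrt hdy.le
    have hnum : 1 * Real.sqrt (1 + a ^ 2 - 2 * a * y)
        - (y - a) * (1 / (2 * Real.sqrt (1 + a ^ 2 - 2 * a * y)) * -(2 * a))
        = (1 - a * y) / Real.sqrt (1 + a ^ 2 - 2 * a * y) := by
      rw [eq_div_iff (ne_of_gt hs)]
      have hinv : Real.sqrt (1 + a ^ 2 - 2 * a * y) * (Real.sqrt (1 + a ^ 2 - 2 * a * y))⁻¹ = 1 :=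
        mul_inv_cancel₀ (ne_of_gt hs)
      linear_combination hs2 + (y - a) * a * hinv
    show _ = (1 - a * y) / Real.sqrt (1 + a ^ 2 - 2 * a * y) ^ 3
    rw [hnum, div_div, ← pow_succ']
  have hbound : ∀ y ∈ Ico a 1, 1 ≤ f' y := by
    intro y hy
    have hdy := hd y hy
    have hs : Real.sqrt (1 + a ^ 2 - 2 * a * y) > 0 := Real.sqrt_pos.mpr hdy
    have hs2 : Real.sqrt (1 + a ^ 2 - 2 * a * y) ^ 2 = 1 + a ^ 2 - 2 * a * y :=
      Real.sq_sqrt hdy.le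
    rcases hy with ⟨hya, hy1⟩
    have hsle : Real.sqrt (1 + a ^ 2 - 2 * a * y) ≤ 1 := by
      nlinarith [hs2]
    have hcube : Real.sqrt (1 + a ^ 2 - 2 * a * y) ^ 3 ≤ 1 - a * y := by
      have : Real.sqrt (1 + a ^ 2 - 2 * a * y) ^ 3
          = Real.sqrt (1 + a ^ 2 - 2 * a * y) ^ 2 * Real.sqrt (1 + a ^ 2 - 2 * a * y) := by
        ring
      rw [this, hs2]
      nlinarith
    have h3pos : 0 < Real.sqrt (1 + a ^ 2 - 2 * a * y) ^ 3 := by positivity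
    show (1:ℝ) ≤ (1 - a * y) / Real.sqrt (1 + a ^ 2 - 2 * a * y) ^ 3
    rw [le_div_iff₀ h3pos]
    simpa using hcube
  have hmono : StrictMonoOn f (Ico a 1) := by
    apply strictMonoOn_of_deriv_pos (convex_Ico a 1)
    · intro y hy
      exact (hderiv y hy).continuousAt.continuousWithinAt
    · intro y hy
      rw [interior_Ico] at hy
      have hy' : y ∈ Ico a 1 := ⟨hy.1.le, hy.2⟩
      rw [(hderiv y hy').deriv]
      linarith [hbound y hy']
  have himg : f '' Ico a 1 ⊆ Icc (0 : ℝ) 1 := by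
    rintro x ⟨y, hy, rfl⟩
    have hdy := hd y hy
    have hs : Real.sqrt (1 + a ^ 2 - 2 * a * y) > 0 := Real.sqrt_pos.mpr hdy
    have hs2 : Real.sqrt (1 + a ^ 2 - 2 * a * y) ^ 2 = 1 + a ^ 2 - 2 * a * y :=
      Real.sq_sqrt hdy.le
    rcases hy with ⟨hya, hy1⟩
    constructor
    · apply div_nonneg (by linarith) hs.le
    · rw [div_le_one hs]
      nlinarith [hs2, Real.sqrt_nonneg (1 + a ^ 2 - 2 * a * y)]
  have hstep1 : (∫⁻ y in Ico a 1, b (f y))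
      ≤ ∫⁻ y in Ico a 1, ENNReal.ofReal |f' y| * b (f y) := by
    apply setLIntegral_mono' measurableSet_Ico
    intro y hy
    have h1 : (1 : ℝ≥0∞) ≤ ENNReal.ofReal |f' y| := by
      rw [← ENNReal.ofReal_one]
      exact ENNReal.ofReal_le_ofReal (by
        have := hbound y hy; rw [abs_of_pos (by linarith)]; linarith)
    calc b (f y) = 1 * b (f y) := (one_mul _).symm
      _ ≤ ENNReal.ofReal |f' y| * b (f y) := mul_le_mul_left h1 _
  have hstep2 : (∫⁻ x in f '' Ico a 1, b x)
      = ∫⁻ y in Ico a 1, ENNReal.ofReal |f' y| * b (f y) := by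
    simpa only [ContinuousLinearMap.det_toSpanSingleton] using
      lintegral_image_eq_lintegral_abs_det_fderiv_mul volume measurableSet_Ico
        (fun y hy => ((hderiv y hy).hasFDerivAt).hasFDerivWithinAt)
        (hmono.injOn) b
  have hstep3 : (∫⁻ x in f '' Ico a 1, b x) ≤ ∫⁻ x in Icc (0 : ℝ) 1, b x :=
    lintegral_mono' (Measure.restrict_mono himg le_rfl) le_rfl
  have hsqrt2 : (1 : ℝ≥0∞) ≤ ENNReal.ofReal (Real.sqrt 2) := by
    rw [← ENNReal.ofReal_one]
    exact ENNReal.ofReal_le_ofReal (by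
      nlinarith [Real.sq_sqrt (by norm_num : (2:ℝ) ≥ 0).le, Real.sqrt_nonneg 2,
        Real.sqrt_le_sqrt (by norm_num : (1:ℝ) ≤ 2), Real.sqrt_one])
  calc (∫⁻ y in Ico a 1, b (f y))
      ≤ ∫⁻ y in Ico a 1, ENNReal.ofReal |f' y| * b (f y) := hstep1
    _ = ∫⁻ x in f '' Ico a 1, b x := hstep2.symm
    _ ≤ ∫⁻ x in Icc (0 : ℝ) 1, b x := hstep3
    _ ≤ ENNReal.ofReal (Real.sqrt 2) * ∫⁻ x in Icc (0 : ℝ) 1, b x :=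
        le_mul_of_one_le_left zero_le hsqrt2
end
end

section
/- For all v, v_* ∈ ℝ³ and I, I_* ∈ [0,∞) one has √(E/m) ≥ √(s̄_{ij}/2) · √( m_i|v|²/(2m) + I/m ) − ⟨v_*,I_*⟩_j, where E = (μ/2)|v−v_*|² + I + I_*. -/
open MeasureTheory Real Set
open scoped ENNReal Classical

noncomputable section

set_option maxHeartbeats 1000000 in
/-- Step 1 of the Lower Bound Lemma:
`√(E/m) ≥ √(s̄/2) √(m_i|v|²/(2m) + I/m) − ⟨v_*,I_*⟩_j`. -/
theorem energy_bracket_lower_bound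
    (mi mj mm : ℝ) (hmi : 0 < mi) (hmj : 0 < mj) (hmm : 0 < mm)
    (v vs : E3) (I Is : ℝ) (hI : 0 ≤ I) (hIs : 0 ≤ Is) :
    Real.sqrt (sbar mi mj / 2) * Real.sqrt (mi * ‖v‖ ^ 2 / (2 * mm) + I / mm)
        - brk mj mm vs Is
      ≤ Real.sqrt (EE mi mj v vs I Is / mm) := by
  have hM : 0 < mi + mj := by linarith
  set A : ℝ := mi * ‖v‖ ^ 2 / (2 * mm) + I / mm with hA
  set B : ℝ := mj * ‖vs‖ ^ 2 / (2 * mm) + Is / mm with hB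
  have hA0 : 0 ≤ A := by positivity
  have hB0 : 0 ≤ B := by positivity
  have hs0 : 0 ≤ sbar mi mj := by unfold sbar; positivity
  have hE0 : 0 ≤ EE mi mj v vs I Is / mm := by unfold EE; positivity
  have hnorm : ‖v‖ ^ 2 ≤ 2 * ‖v - vs‖ ^ 2 + 2 * ‖vs‖ ^ 2 := by
    have h1 : ‖v‖ ≤ ‖v - vs‖ + ‖vs‖ := by
      have := norm_add_le (v - vs) vs
      simpa using this
    nlinarith [mul_self_le_mul_self (norm_nonneg v) h1,
      sq_nonneg (‖v - vs‖ - ‖vs‖), norm_nonneg (v - vs), norm_nonneg vs]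
  have core : min mi mj / (mi + mj) / 2 * (mi * ‖v‖ ^ 2 / 2 + I) ≤
      (mi * mj / (mi + mj) / 2 * ‖v - vs‖ ^ 2 + I + Is) + (mj * ‖vs‖ ^ 2 / 2 + Is) := by
    have hmin1 : min mi mj ≤ mi := min_le_left _ _
    have hmin2 : min mi mj ≤ mj := min_le_right _ _
    have hmin0 : 0 < min mi mj := lt_min hmi hmj
    have hy : (0:ℝ) ≤ ‖v - vs‖ ^ 2 := by positivity
    have hz : (0:ℝ) ≤ ‖vs‖ ^ 2 := by positivity
    have e1 : min mi mj / (mi + mj) * mi ≤ mi * mj / (mi + mj) := by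
      rw [div_mul_eq_mul_div, div_le_div_iff₀ hM hM]; nlinarith [mul_le_mul_of_nonneg_right (mul_le_mul_of_nonneg_right hmin2 hmi.le) hM.le]
    have e2 : min mi mj / (mi + mj) * mi ≤ mj := by
      rw [div_mul_eq_mul_div, div_le_iff₀ hM]; nlinarith
    have e3 : min mi mj / (mi + mj) ≤ 1 := by
      rw [div_le_one hM]; nlinarith
    nlinarith [mul_le_mul_of_nonneg_right e1 hy, mul_le_mul_of_nonneg_right e2 hz,
      mul_le_mul_of_nonneg_right e3 hI,
      mul_le_mul_of_nonneg_left hnorm (le_of_lt hmin0),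
      mul_le_mul_of_nonneg_left hnorm (by positivity :
        (0:ℝ) ≤ min mi mj / (mi + mj) * mi)]
  have key : sbar mi mj / 2 * A ≤ EE mi mj v vs I Is / mm + B := by
    have l1 : sbar mi mj / 2 * A
        = (min mi mj / (mi + mj) / 2 * (mi * ‖v‖ ^ 2 / 2 + I)) / mm := by
      rw [hA]; unfold sbar; ring
    have l2 : EE mi mj v vs I Is / mm + B
        = ((mi * mj / (mi + mj) / 2 * ‖v - vs‖ ^ 2 + I + Is)
            + (mj * ‖vs‖ ^ 2 / 2 + Is)) / mm := by
      rw [hB]; unfold EE; ring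
    rw [l1, l2]
    exact div_le_div_of_nonneg_right core hmm.le
  have step1 : Real.sqrt (sbar mi mj / 2) * Real.sqrt A =
      Real.sqrt (sbar mi mj / 2 * A) := (Real.sqrt_mul (by positivity) A).symm
  have step2 : Real.sqrt (sbar mi mj / 2 * A) ≤
      Real.sqrt (EE mi mj v vs I Is / mm + B) := Real.sqrt_le_sqrt key
  have step3 : Real.sqrt (EE mi mj v vs I Is / mm + B) ≤
      Real.sqrt (EE mi mj v vs I Is / mm) + Real.sqrt B := by
    have ha := Real.sq_sqrt hE0
    have hb := Real.sq_sqrt hB0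
    have hab : 0 ≤ Real.sqrt (EE mi mj v vs I Is / mm) * Real.sqrt B :=
      mul_nonneg (Real.sqrt_nonneg _) (Real.sqrt_nonneg _)
    have hle : EE mi mj v vs I Is / mm + B ≤
        (Real.sqrt (EE mi mj v vs I Is / mm) + Real.sqrt B) ^ 2 := by
      have : (Real.sqrt (EE mi mj v vs I Is / mm) + Real.sqrt B) ^ 2
          = Real.sqrt (EE mi mj v vs I Is / mm) ^ 2 + 2 *
            (Real.sqrt (EE mi mj v vs I Is / mm) * Real.sqrt B) + Real.sqrt B ^ 2 := by
        ring
      rw [this, ha, hb]; linarith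
    have h := Real.sqrt_le_sqrt hle
    rwa [Real.sqrt_sq (by positivity)] at h
  have step4 : Real.sqrt B ≤ brk mj mm vs Is := by
    unfold brk
    apply Real.sqrt_le_sqrt
    rw [hB]; linarith
  have := (step1 ▸ step2).trans step3
  linarith
end
end

section
/- Let g : ℝ³×[0,∞) → [0,∞) be measurable, let β ≥ 0, ℓ ≥ 0 and K > 1. Then ∫_{ℝ³×[0,∞)} g(v,I) ⟨v,I⟩_j^{β} · 1_{{g(v,I)⟨v,I⟩_j^{ℓ} ≥ K}} dv dI ≤ (log K)^{−1/(β+1)} · ( ∫_{ℝ³×[0,∞)} g(v,I) ⟨v,I⟩_j^{β+1} dv dI )^{β/(β+1)} · ( ∫_{ℝ³×[0,∞)} g(v,I) |log( g(v,I) ⟨v,I⟩_j^{ℓ} )| dv dI )^{1/(β+1)}. -/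
open MeasureTheory Real Set
open scoped ENNReal Classical

noncomputable section

private lemma brk_one_le_aux (mj mm : ℝ) (hmj : 0 < mj) (hmm : 0 < mm) (v : E3) {I : ℝ}
    (hI : 0 ≤ I) : 1 ≤ brk mj mm v I := by
  have h1 : 0 ≤ mj * ‖v‖ ^ 2 / (2 * mm) := by positivity
  have h2 : 0 ≤ I / mm := by positivity
  have h := Real.sqrt_le_sqrt (show (1:ℝ) ≤ 1 + mj * ‖v‖ ^ 2 / (2 * mm) + I / mm by linarith)
  simpa [brk] using h

private lemma key_pointwise_aux {β ℓ K g b : ℝ} (hβ : 0 ≤ β) (hK : 1 < K)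
    (hb : 1 ≤ b) (hcond : K ≤ g * b ^ ℓ) :
    g * b ^ β ≤ (g * b ^ (β + 1)) ^ (β / (β + 1)) *
      (g * |Real.log (g * b ^ ℓ)| / Real.log K) ^ (1 / (β + 1)) := by
  have hb0 : (0:ℝ) < b := lt_of_lt_of_le one_pos hb
  have hbl : (0:ℝ) < b ^ ℓ := Real.rpow_pos_of_pos hb0 ℓ
  have hgpos : 0 < g := by
    by_contra h
    push_neg at h
    nlinarith
  have hlogK : 0 < Real.log K := Real.log_pos hK
  have hlog : Real.log K ≤ Real.log (g * b ^ ℓ) := Real.log_le_log (by linarith) hcond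
  have habs : |Real.log (g * b ^ ℓ)| = Real.log (g * b ^ ℓ) :=
    abs_of_nonneg (le_trans hlogK.le hlog)
  have hratio : g ≤ g * |Real.log (g * b ^ ℓ)| / Real.log K := by
    rw [habs, le_div_iff₀ hlogK]
    nlinarith
  have hβ1 : β + 1 ≠ 0 := by positivity
  have e1 : (g * b ^ (β + 1)) ^ (β / (β + 1)) * g ^ (1 / (β + 1)) = g * b ^ β := by
    rw [Real.mul_rpow hgpos.le (Real.rpow_nonneg hb0.le _), ← Real.rpow_mul hb0.le,
      mul_right_comm, ← Real.rpow_add hgpos,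
      show β / (β + 1) + 1 / (β + 1) = 1 by field_simp,
      show (β + 1) * (β / (β + 1)) = β by field_simp, Real.rpow_one]
  calc g * b ^ β = (g * b ^ (β + 1)) ^ (β / (β + 1)) * g ^ (1 / (β + 1)) := e1.symm
    _ ≤ (g * b ^ (β + 1)) ^ (β / (β + 1)) *
        (g * |Real.log (g * b ^ ℓ)| / Real.log K) ^ (1 / (β + 1)) := by
        apply mul_le_mul_of_nonneg_left
          (Real.rpow_le_rpow hgpos.le hratio (by positivity))
          (Real.rpow_nonneg (by positivity) _)

private lemma holder_aux {α : Type*} [MeasurableSpace α] (μ : Measure α) (F H : α → ℝ≥0∞)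
    (hF : Measurable F) (hH : Measurable H) {a : ℝ} (ha : 0 ≤ a) (ha1 : a < 1) :
    ∫⁻ x, F x ^ a * H x ^ (1 - a) ∂μ ≤ (∫⁻ x, F x ∂μ) ^ a * (∫⁻ x, H x ∂μ) ^ (1 - a) := by
  rcases ha.eq_or_lt with h0 | h0
  · simp [← h0]
  · have hpq : Real.HolderConjugate (1/a) (1/(1-a)) := by
      constructor
      · rw [one_div, one_div, inv_inv, inv_inv, inv_one]; ring
      · exact one_div_pos.mpr h0
      · exact one_div_pos.mpr (by linarith)
    calc ∫⁻ x, F x ^ a * H x ^ (1 - a) ∂μ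
        ≤ (∫⁻ x, (F x ^ a) ^ (1/a) ∂μ) ^ (1/(1/a)) *
          (∫⁻ x, (H x ^ (1-a)) ^ (1/(1-a)) ∂μ) ^ (1/(1/(1-a))) :=
          ENNReal.lintegral_mul_le_Lp_mul_Lq μ hpq
            (hF.pow_const a).aemeasurable (hH.pow_const (1-a)).aemeasurable
      _ = (∫⁻ x, F x ∂μ) ^ a * (∫⁻ x, H x ∂μ) ^ (1 - a) := by
          have h1 : a * (1/a) = 1 := by field_simp
          have hne : (1:ℝ) - a ≠ 0 := by linarith
          have h2 : (1-a) * (1/(1-a)) = 1 := by field_simp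
          simp_rw [← ENNReal.rpow_mul, h1, h2, ENNReal.rpow_one, one_div_one_div]

/-- Estimate (7.9): entropy control of the weighted mass of the region where
`g⟨·⟩^ℓ ≥ K`. -/
theorem weighted_tail_entropy_estimate
    (mj mm β ℓ K : ℝ) (hmj : 0 < mj) (hmm : 0 < mm)
    (hβ : 0 ≤ β) (hℓ : 0 ≤ ℓ) (hK : 1 < K)
    (g : E3 × ℝ → ℝ) (hg : Measurable g) (hg0 : ∀ x, 0 ≤ g x) :
    (∫⁻ x in regionVI, ENNReal.ofReal
        (if K ≤ g x * brk mj mm x.1 x.2 ^ ℓ then g x * brk mj mm x.1 x.2 ^ β else 0))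
      ≤ ENNReal.ofReal (Real.log K ^ (-(1 / (β + 1))))
        * (∫⁻ x in regionVI, ENNReal.ofReal (g x * brk mj mm x.1 x.2 ^ (β + 1)))
            ^ (β / (β + 1))
        * (∫⁻ x in regionVI, ENNReal.ofReal
            (g x * |Real.log (g x * brk mj mm x.1 x.2 ^ ℓ)|)) ^ (1 / (β + 1)) := by
  have hβ1 : (0:ℝ) < β + 1 := by linarith
  have hlogK : 0 < Real.log K := Real.log_pos hK
  have hinv : (0:ℝ) ≤ (Real.log K)⁻¹ := inv_nonneg.mpr hlogK.le
  have hbrk : Measurable fun x : E3 × ℝ => brk mj mm x.1 x.2 := by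
    unfold brk
    fun_prop
  set F : E3 × ℝ → ℝ≥0∞ := fun x => ENNReal.ofReal (g x * brk mj mm x.1 x.2 ^ (β + 1))
    with hFdef
  set H : E3 × ℝ → ℝ≥0∞ := fun x =>
    ENNReal.ofReal ((Real.log K)⁻¹) *
      ENNReal.ofReal (g x * |Real.log (g x * brk mj mm x.1 x.2 ^ ℓ)|) with hHdef
  have hbrkp : ∀ c : ℝ, Measurable fun x : E3 × ℝ => brk mj mm x.1 x.2 ^ c := by
    intro c
    unfold brk
    fun_prop
  have hF : Measurable F :=
    ENNReal.measurable_ofReal.comp (hg.mul (hbrkp (β + 1)))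
  have hB : Measurable fun x : E3 × ℝ =>
      ENNReal.ofReal (g x * |Real.log (g x * brk mj mm x.1 x.2 ^ ℓ)|) :=
    ENNReal.measurable_ofReal.comp
      (hg.mul ((Real.measurable_log.comp (hg.mul (hbrkp ℓ))).abs))
  have hH : Measurable H := measurable_const.mul hB
  have hregion : MeasurableSet regionVI := measurable_snd measurableSet_Ici
  have hpt : ∀ x ∈ regionVI, ENNReal.ofReal
      (if K ≤ g x * brk mj mm x.1 x.2 ^ ℓ then g x * brk mj mm x.1 x.2 ^ β else 0)
      ≤ F x ^ (β / (β + 1)) * H x ^ (1 / (β + 1)) := by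
    intro x hx
    by_cases hc : K ≤ g x * brk mj mm x.1 x.2 ^ ℓ
    · rw [if_pos hc]
      have hb1 : 1 ≤ brk mj mm x.1 x.2 := brk_one_le_aux mj mm hmj hmm x.1 hx
      have hb0 : (0:ℝ) < brk mj mm x.1 x.2 := lt_of_lt_of_le one_pos hb1
      have key := key_pointwise_aux hβ hK hb1 hc
      refine le_trans (ENNReal.ofReal_le_ofReal key) ?_
      have h1 : 0 ≤ g x * brk mj mm x.1 x.2 ^ (β + 1) :=
        mul_nonneg (hg0 x) (Real.rpow_nonneg hb0.le _)
      have h2 : 0 ≤ g x * |Real.log (g x * brk mj mm x.1 x.2 ^ ℓ)| / Real.log K :=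
        div_nonneg (mul_nonneg (hg0 x) (abs_nonneg _)) hlogK.le
      rw [ENNReal.ofReal_mul (Real.rpow_nonneg h1 _),
        ← ENNReal.ofReal_rpow_of_nonneg h1 (by positivity),
        ← ENNReal.ofReal_rpow_of_nonneg h2 (by positivity)]
      have hrw : g x * |Real.log (g x * brk mj mm x.1 x.2 ^ ℓ)| / Real.log K
          = (Real.log K)⁻¹ * (g x * |Real.log (g x * brk mj mm x.1 x.2 ^ ℓ)|) := by
        ring
      rw [hrw, ENNReal.ofReal_mul hinv]
    · simp [if_neg hc]
  have ha0 : (0:ℝ) ≤ β / (β + 1) := by positivity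
  have ha1 : β / (β + 1) < 1 := by
    rw [div_lt_one hβ1]; linarith
  have hsub : 1 - β / (β + 1) = 1 / (β + 1) := by field_simp; ring
  have hcne : ENNReal.ofReal ((Real.log K)⁻¹) ≠ ⊤ := ENNReal.ofReal_ne_top
  calc (∫⁻ x in regionVI, ENNReal.ofReal
        (if K ≤ g x * brk mj mm x.1 x.2 ^ ℓ then g x * brk mj mm x.1 x.2 ^ β else 0))
      ≤ ∫⁻ x in regionVI, F x ^ (β / (β + 1)) * H x ^ (1 / (β + 1)) :=
        setLIntegral_mono ((hF.pow_const _).mul (hH.pow_const _)) hpt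
    _ = ∫⁻ x in regionVI, F x ^ (β / (β + 1)) * H x ^ (1 - β / (β + 1)) := by
        rw [hsub]
    _ ≤ (∫⁻ x in regionVI, F x) ^ (β / (β + 1)) *
        (∫⁻ x in regionVI, H x) ^ (1 - β / (β + 1)) :=
        holder_aux (volume.restrict regionVI) F H hF hH ha0 ha1
    _ = (∫⁻ x in regionVI, F x) ^ (β / (β + 1)) *
        (ENNReal.ofReal ((Real.log K)⁻¹) *
          ∫⁻ x in regionVI, ENNReal.ofReal
            (g x * |Real.log (g x * brk mj mm x.1 x.2 ^ ℓ)|)) ^ (1 / (β + 1)) := by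
        rw [hsub, hHdef]
        rw [lintegral_const_mul' _ _ hcne]
    _ = ENNReal.ofReal (Real.log K ^ (-(1 / (β + 1))))
        * (∫⁻ x in regionVI, ENNReal.ofReal (g x * brk mj mm x.1 x.2 ^ (β + 1)))
            ^ (β / (β + 1))
        * (∫⁻ x in regionVI, ENNReal.ofReal
            (g x * |Real.log (g x * brk mj mm x.1 x.2 ^ ℓ)|)) ^ (1 / (β + 1)) := by
        rw [ENNReal.mul_rpow_of_nonneg _ _ (by positivity)]
        have hc : ENNReal.ofReal ((Real.log K)⁻¹) ^ (1 / (β + 1))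
            = ENNReal.ofReal (Real.log K ^ (-(1 / (β + 1)))) := by
          rw [ENNReal.ofReal_rpow_of_nonneg hinv (by positivity),
            Real.inv_rpow hlogK.le, ← Real.rpow_neg hlogK.le]
        rw [hc]
        ring
end
end

section
/- Let a, b, c, x be nonnegative real numbers with a + c > 0. Then max{ b·x − a , c } ≥ (c/2)·(1 + b·x/(a+c)) ≥ (c/2)·min{1, b/(a+c)}·(1 + x). -/
open MeasureTheory Real Set
open scoped ENNReal Classical

noncomputable section

/-- Elementary pointwise estimate: `max{bx − a, c} ≥ (c/2)(1 + bx/(a+c)) ≥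
(c/2) min{1, b/(a+c)} (1+x)` for nonnegative `a,b,c,x` with `a + c > 0`. -/
theorem max_lower_bound_estimate
    (a b c x : ℝ) (ha : 0 ≤ a) (hb : 0 ≤ b) (hc : 0 ≤ c) (hx : 0 ≤ x)
    (hac : 0 < a + c) :
    c / 2 * (1 + b * x / (a + c)) ≤ max (b * x - a) c
    ∧ c / 2 * min 1 (b / (a + c)) * (1 + x) ≤ c / 2 * (1 + b * x / (a + c)) := by
  constructor
  · rcases le_or_gt (b * x) (a + c) with h | h
    · refine le_trans ?_ (le_max_right _ _)
      have h1 : b * x / (a + c) ≤ 1 := (div_le_one hac).2 h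
      nlinarith
    · refine le_trans ?_ (le_max_left _ _)
      have ht : 1 ≤ b * x / (a + c) := (one_le_div hac).2 h.le
      have he : (a + c) * (b * x / (a + c)) = b * x := mul_div_cancel₀ _ hac.ne'
      nlinarith [mul_nonneg ha (sub_nonneg.2 ht), mul_nonneg hc (sub_nonneg.2 ht)]
  · rcases min_cases 1 (b / (a + c)) with ⟨h1, h2⟩ | ⟨h1, h2⟩
    · rw [h1]
      have h3 : x ≤ b * x / (a + c) := by
        calc x = 1 * x := (one_mul x).symm
        _ ≤ b / (a + c) * x := mul_le_mul_of_nonneg_right h2 hx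
        _ = b * x / (a + c) := by ring
      nlinarith
    · rw [h1]
      have h3 : b / (a + c) * x ≤ b * x / (a + c) := le_of_eq (by ring)
      nlinarith [mul_le_of_le_one_left hx h2.le,
        mul_nonneg hc (div_nonneg hb hac.le)]
end
end
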